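/- Let G be a k-regular graph on n vertices with adjacency matrix A and least eigenvalue λ_min < 0. Then the independence number of G satisfies α(G) ≤ n · (-λ_min)/(k - λ_min). -/

import Mathlib

/-- The independence number of a graph: the clique number of the complement. -/
noncomputable def SimpleGraph.indepNum' {V : Type*} (G : SimpleGraph V) : ℕ :=
  Gᶜ.cliqueNum

section HoffmanAux

open Matrix Finset SimpleGraph

lemma hoffman_aux_exists_eigenvector {n : Type*} [Fintype n] [DecidableEq n]
    {A : Matrix n n ℝ} (hA : A.IsHermitian) (i : n) :
    ∃ v : n → ℝ, v ≠ 0 ∧ A *ᵥ v = hA.eigenvalues i • v := by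
  refine ⟨⇑(hA.eigenvectorBasis i), ?_, hA.mulVec_eigenvectorBasis i⟩
  have h0 : hA.eigenvectorBasis i ≠ 0 :=
    (hA.eigenvectorBasis).orthonormal.ne_zero i
  intro h
  apply h0
  ext j
  exact congrFun h j

lemma hoffman_aux_hasEigenvalue {n : Type*} [Fintype n] [DecidableEq n]
    {A : Matrix n n ℝ} {μ : ℝ} {v : n → ℝ} (hv : v ≠ 0) (h : A *ᵥ v = μ • v) :
    Module.End.HasEigenvalue (Matrix.mulVecLin A) μ :=
  Module.End.hasEigenvalue_of_hasEigenvector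
    ⟨Module.End.mem_eigenspace_iff.mpr (by simpa [Matrix.mulVecLin_apply] using h), hv⟩

lemma hoffman_aux_posSemidef {V : Type*} [Fintype V] [DecidableEq V] (G : SimpleGraph V)
    [DecidableRel G.Adj] (lammin : ℝ)
    (h_min : ∀ μ : ℝ, Module.End.HasEigenvalue (Matrix.mulVecLin (G.adjMatrix ℝ)) μ →
      lammin ≤ μ) :
    ((G.adjMatrix ℝ) - lammin • 1).PosSemidef := by
  have hB : ((G.adjMatrix ℝ) - lammin • 1).IsHermitian := by
    unfold Matrix.IsHermitian
    ext u v
    simp [Matrix.conjTranspose_apply, SimpleGraph.adj_comm, Matrix.one_apply, eq_comm]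
  refine hB.posSemidef_iff_eigenvalues_nonneg.mpr fun i => ?_
  obtain ⟨v, hv, hAv⟩ := hoffman_aux_exists_eigenvector hB i
  have hAv' : (G.adjMatrix ℝ) *ᵥ v = (hB.eigenvalues i + lammin) • v := by
    rw [Matrix.sub_mulVec] at hAv
    have h1 : (lammin • (1 : Matrix V V ℝ)) *ᵥ v = lammin • v := by
      rw [Matrix.smul_mulVec, Matrix.one_mulVec]
    rw [h1, sub_eq_iff_eq_add] at hAv
    rw [add_smul, hAv]
  have := h_min _ (hoffman_aux_hasEigenvalue hv hAv')
  rw [Pi.zero_apply]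
  linarith

lemma hoffman_aux_quadform {V : Type*} [Fintype V] [DecidableEq V] (G : SimpleGraph V)
    [DecidableRel G.Adj] (k : ℕ) (hreg : G.IsRegularOfDegree k)
    (S : Finset V) (hind : ∀ u ∈ S, ∀ v ∈ S, ¬ G.Adj u v) (c : ℝ) :
    (fun v => (if v ∈ S then (1:ℝ) else 0) - c) ⬝ᵥ
      ((G.adjMatrix ℝ) *ᵥ (fun v => (if v ∈ S then (1:ℝ) else 0) - c)) =
      - (S.card : ℝ) * ((k:ℝ) * c) - c * ((k:ℝ) * (S.card : ℝ))
        + (Fintype.card V : ℝ) * (c * ((k:ℝ) * c)) ∧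
    (fun v => (if v ∈ S then (1:ℝ) else 0) - c) ⬝ᵥ
      (fun v => (if v ∈ S then (1:ℝ) else 0) - c) =
      (S.card : ℝ) - 2 * c * (S.card : ℝ) + (Fintype.card V : ℝ) * (c * c) := by
  classical
  set χ : V → ℝ := fun v => if v ∈ S then (1:ℝ) else 0 with hχ
  have hxeq : (fun v => (if v ∈ S then (1:ℝ) else 0) - c) = χ - Function.const V c := rfl
  rw [hxeq]
  have Tsum : ∀ w : V → ℝ, χ ⬝ᵥ w = ∑ v ∈ S, w v := by
    intro w
    simp [dotProduct, hχ, ite_mul, one_mul, zero_mul, Finset.sum_ite_mem,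
      Finset.univ_inter]
  have Tsum' : ∀ w : V → ℝ, w ⬝ᵥ χ = ∑ v ∈ S, w v := by
    intro w; rw [dotProduct_comm]; exact Tsum w
  have hmul : (G.adjMatrix ℝ) *ᵥ (χ - Function.const V c)
      = ((G.adjMatrix ℝ) *ᵥ χ) - Function.const V ((k:ℝ) * c) := by
    rw [Matrix.mulVec_sub]
    congr 1
    ext u
    exact adjMatrix_mulVec_const_apply_of_regular hreg
  have T1 : χ ⬝ᵥ ((G.adjMatrix ℝ) *ᵥ χ) = 0 := by
    rw [Tsum]
    refine Finset.sum_eq_zero fun u hu => ?_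
    rw [adjMatrix_mulVec_apply]
    refine Finset.sum_eq_zero fun v hv => ?_
    have hadj : G.Adj u v := by rwa [SimpleGraph.mem_neighborFinset] at hv
    have : v ∉ S := fun hvS => hind u hu v hvS hadj
    simp [hχ, this]
  have hχ1 : χ ⬝ᵥ Function.const V ((k:ℝ) * c) = (S.card : ℝ) * ((k:ℝ) * c) := by
    rw [Tsum]; simp [Function.const, mul_comm]
  have T3 : Function.const V c ⬝ᵥ ((G.adjMatrix ℝ) *ᵥ χ) = c * ((k:ℝ) * (S.card : ℝ)) := by
    rw [Matrix.dotProduct_mulVec]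
    have hvm : Function.const V c ᵥ* (G.adjMatrix ℝ) = Function.const V ((k:ℝ) * c) := by
      ext v
      rw [adjMatrix_vecMul_apply]
      simp [Function.const, Finset.sum_const, SimpleGraph.card_neighborFinset_eq_degree, hreg v,
        nsmul_eq_mul]
    rw [hvm, Tsum']
    simp [Function.const, Finset.sum_const, nsmul_eq_mul]
    ring
  have T4 : Function.const V c ⬝ᵥ Function.const V ((k:ℝ) * c)
      = (Fintype.card V : ℝ) * (c * ((k:ℝ) * c)) := by
    simp [dotProduct, Function.const, Finset.sum_const, nsmul_eq_mul, Finset.card_univ]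
  have hχχ : χ ⬝ᵥ χ = (S.card : ℝ) := by
    rw [Tsum]; simp [hχ]
  have hχc : χ ⬝ᵥ Function.const V c = (S.card : ℝ) * c := by
    rw [Tsum]; simp [Function.const, mul_comm]
  have hcχ : Function.const V c ⬝ᵥ χ = c * (S.card : ℝ) := by
    rw [Tsum']; simp [Function.const, Finset.sum_const, nsmul_eq_mul]; ring
  have hcc : Function.const V c ⬝ᵥ Function.const V c = (Fintype.card V : ℝ) * (c * c) := by
    simp [dotProduct, Function.const, Finset.sum_const, nsmul_eq_mul, Finset.card_univ]
  constructor
  · rw [hmul, sub_dotProduct, dotProduct_sub, dotProduct_sub,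
      T1, hχ1, T3, T4]
    ring
  · rw [sub_dotProduct, dotProduct_sub, dotProduct_sub,
      hχχ, hχc, hcχ, hcc]
    ring

end HoffmanAux

open Matrix SimpleGraph Finset in
/-- Hoffman's ratio bound: if `G` is a `k`-regular graph on `n` vertices whose adjacency
matrix has least eigenvalue `λmin < 0`, then `α(G) ≤ n · (-λmin)/(k - λmin)`. -/
theorem stmt_9 {V : Type*} [Fintype V] [DecidableEq V] (G : SimpleGraph V)
    [DecidableRel G.Adj] (k : ℕ) (hreg : G.IsRegularOfDegree k)
    (lammin : ℝ)
    (h_eig : Module.End.HasEigenvalue (Matrix.mulVecLin (G.adjMatrix ℝ)) lammin)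
    (h_min : ∀ μ : ℝ, Module.End.HasEigenvalue (Matrix.mulVecLin (G.adjMatrix ℝ)) μ →
      lammin ≤ μ)
    (h_neg : lammin < 0) :
    (G.indepNum' : ℝ) ≤ (Fintype.card V : ℝ) * (-lammin) / ((k : ℝ) - lammin) := by
  classical
  obtain ⟨S, hS⟩ := Gᶜ.exists_isNClique_cliqueNum
  have hcard : (S.card : ℝ) = (G.indepNum' : ℝ) := by
    have : S.card = Gᶜ.cliqueNum := hS.card_eq
    rw [this]; rfl
  have hkl : (0:ℝ) < (k:ℝ) - lammin := by
    have : (0:ℝ) ≤ (k:ℝ) := Nat.cast_nonneg k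
    linarith
  set a : ℝ := (S.card : ℝ) with ha_def
  set nn : ℝ := (Fintype.card V : ℝ) with hnn_def
  rcases eq_or_lt_of_le (by positivity : (0:ℝ) ≤ a) with h0 | ha
  · rw [← hcard, ← h0]
    have h1 : (0:ℝ) ≤ -lammin := by linarith
    positivity
  have han : a ≤ nn := by
    rw [ha_def, hnn_def]
    exact_mod_cast Finset.card_le_card (Finset.subset_univ S)
  have hnpos : (0:ℝ) < nn := lt_of_lt_of_le ha han
  -- independence of S
  have hind : ∀ u ∈ S, ∀ v ∈ S, ¬ G.Adj u v := by
    intro u hu v hv hadj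
    have hne : u ≠ v := hadj.ne
    have := hS.1 (Finset.mem_coe.mpr hu) (Finset.mem_coe.mpr hv) hne
    rw [SimpleGraph.compl_adj] at this
    exact this.2 hadj
  set c : ℝ := a / nn with hc_def
  set x : V → ℝ := fun v => (if v ∈ S then (1:ℝ) else 0) - c with hx_def
  have hPSD := hoffman_aux_posSemidef G lammin h_min
  have hquad : 0 ≤ x ⬝ᵥ (((G.adjMatrix ℝ) - lammin • 1) *ᵥ x) := by
    have := hPSD.dotProduct_mulVec_nonneg x
    rwa [star_trivial] at this
  have hexp : x ⬝ᵥ (((G.adjMatrix ℝ) - lammin • 1) *ᵥ x)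
      = x ⬝ᵥ ((G.adjMatrix ℝ) *ᵥ x) - lammin * (x ⬝ᵥ x) := by
    rw [Matrix.sub_mulVec, dotProduct_sub, Matrix.smul_mulVec,
      Matrix.one_mulVec, dotProduct_smul, smul_eq_mul]
  obtain ⟨hq1, hq2⟩ := hoffman_aux_quadform G k hreg S hind c
  rw [hexp, hx_def, hq1, hq2] at hquad
  -- clear denominators: c = a / nn
  have hca : c * nn = a := by
    rw [hc_def]; field_simp
  rw [← ha_def, ← hnn_def] at hquad
  have h2 := mul_nonneg hquad (mul_nonneg hnpos.le hnpos.le)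
  have heq : (-a * ((k:ℝ) * c) - c * ((k:ℝ) * a) + nn * (c * ((k:ℝ) * c))
        - lammin * (a - 2 * c * a + nn * (c * c))) * (nn * nn)
      = (-(k:ℝ)*(a*a)*nn - lammin*(a*nn - a*a)*nn) + ((k:ℝ)-lammin)*nn*(c*nn - a)^2 := by
    ring
  have hu : c * nn - a = 0 := by rw [hca]; ring
  rw [heq, hu] at h2
  have h3 : 0 ≤ -(k:ℝ)*(a*a)*nn - lammin*(a*nn - a*a)*nn := by nlinarith [h2]
  -- main inequality
  rw [← hcard, le_div_iff₀ hkl]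
  nlinarith [h3, hnpos, ha, mul_pos hnpos ha]
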